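/- Let P ⊆ ℝⁿ be a Delone set of finite local complexity. There exists ε with 0 < ε < 1 such that for every differentiable function φ : ℝⁿ → ℝⁿ with sup_{x ∈ ℝⁿ} ‖Dφ(x) − I‖ < ε the following holds: for every r > 0 there exists r' > 0 such that for all x, y ∈ P, B_{r'}[φ(P) − φ(x)] = B_{r'}[φ(P) − φ(y)] implies B_r[P − x] = B_r[P − y]. -/

import Mathlib

open Metric Set

noncomputable section

/-- Euclidean space ℝⁿ. -/
abbrev Euc (n : ℕ) := EuclideanSpace ℝ (Fin n)

/-- The translate `P - x = {p - x : p ∈ P}`. -/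
def shiftSet {n : ℕ} (P : Set (Euc n)) (x : Euc n) : Set (Euc n) :=
  (fun p => p - x) '' P

/-- The `r`-patch of `P` around `x`: `B_r[P - x] = B(0,r) ∩ (P - x)`. -/
def patch {n : ℕ} (P : Set (Euc n)) (r : ℝ) (x : Euc n) : Set (Euc n) :=
  ball (0 : Euc n) r ∩ shiftSet P x

/-- `P` is uniformly discrete: there is a positive minimal distance between points. -/
def UnifDiscrete {n : ℕ} (P : Set (Euc n)) : Prop :=
  ∃ δ > 0, ∀ p ∈ P, ∀ q ∈ P, p ≠ q → δ ≤ ‖p - q‖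

/-- `P` is relatively dense: every ball of radius `R` contains a point of `P`. -/
def RelDense {n : ℕ} (P : Set (Euc n)) : Prop :=
  ∃ R > 0, ∀ x : Euc n, ∃ p ∈ P, ‖p - x‖ < R

/-- `P` has finite local complexity: for each `r > 0`, only finitely many `r`-patches
around points of `P`. -/
def FLC {n : ℕ} (P : Set (Euc n)) : Prop :=
  ∀ r > 0, {s : Set (Euc n) | ∃ x ∈ P, s = patch P r x}.Finite

/-- `f` is `P`-equivariant with range `R`. -/
def EquivRange {n : ℕ} {F : Type*} (P : Set (Euc n)) (R : ℝ) (f : Euc n → F) : Prop :=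
  ∀ x y : Euc n, patch P R x = patch P R y → f x = f y

/-- `f` is strongly `P`-equivariant: `P`-equivariant with some finite range `R > 0`. -/
def StrongEquiv {n : ℕ} {F : Type*} (P : Set (Euc n)) (f : Euc n → F) : Prop :=
  ∃ R > 0, EquivRange P R f

/-- `f`, viewed as a function on the subset `Q`, is `P`-equivariant with range `R`. -/
def EquivRangeOn {n : ℕ} {F : Type*} (P Q : Set (Euc n)) (R : ℝ) (f : Euc n → F) : Prop :=
  ∀ x ∈ Q, ∀ y ∈ Q, patch P R x = patch P R y → f x = f y

/-- `f`, viewed as a function on the subset `Q`, is strongly `P`-equivariant. -/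
def StrongEquivOn {n : ℕ} {F : Type*} (P Q : Set (Euc n)) (f : Euc n → F) : Prop :=
  ∃ R > 0, EquivRangeOn P Q R f

/-- `Q` is locally derivable from `P`. -/
def LocallyDerivable {n : ℕ} (P Q : Set (Euc n)) : Prop :=
  ∃ R > 0, ∀ x y : Euc n, patch P R x = patch P R y →
    ({0} : Set (Euc n)) ∩ shiftSet Q x = ({0} : Set (Euc n)) ∩ shiftSet Q y

/-- Hypothesis (H): for every `r > 0` there is `r' > 0` such that for all `x`,
`B(φ(x), r) ∩ φ(P) ⊆ φ(B(x, r') ∩ P)`. -/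
def HypoH {n : ℕ} (P : Set (Euc n)) (φ : Euc n → Euc n) : Prop :=
  ∀ r > 0, ∃ r' > 0, ∀ x : Euc n, ball (φ x) r ∩ (φ '' P) ⊆ φ '' (ball x r' ∩ P)

/-- The pattern metric `D` on closed subsets of ℝⁿ. -/
def patternDist {n : ℕ} (A B : Set (Euc n)) : ℝ :=
  sInf {ε : ℝ | 0 < ε ∧ Metric.hausdorffDist
    ((ball (0 : Euc n) (1 / ε) ∩ A) ∪ sphere (0 : Euc n) (1 / ε))
    ((ball (0 : Euc n) (1 / ε) ∩ B) ∪ sphere (0 : Euc n) (1 / ε)) ≤ ε}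

/-- A continuous `f : ℝⁿ → ℝⁿ` is weakly `P`-equivariant if it is uniformly approximated
by strongly `P`-equivariant continuous functions. -/
def WeakEquiv {n : ℕ} (P : Set (Euc n)) (f : Euc n → Euc n) : Prop :=
  ∀ ε > 0, ∃ g : Euc n → Euc n, Continuous g ∧ StrongEquiv P g ∧ ∀ x : Euc n, ‖f x - g x‖ < ε

/-- `P` is aperiodic: the only translation fixing `P` is `0`. -/
def IsAperiodicSet {n : ℕ} (P : Set (Euc n)) : Prop :=
  ∀ x : Euc n, shiftSet P x = P → x = 0


namespace Stmt16Aux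

variable {n : ℕ}

lemma mem_shiftSet {Q : Set (Euc n)} {a v : Euc n} : v ∈ shiftSet Q a ↔ a + v ∈ Q := by
  constructor
  · rintro ⟨p, hp, rfl⟩; simpa using hp
  · intro h; exact ⟨a + v, h, add_sub_cancel_left a v⟩

lemma mem_patch {Q : Set (Euc n)} {s : ℝ} {a v : Euc n} :
    v ∈ patch Q s a ↔ ‖v‖ < s ∧ a + v ∈ Q := by
  simp [patch, mem_shiftSet, mem_ball_zero_iff]

lemma patch_eq_mono {Q : Set (Euc n)} {s t : ℝ} (hts : t ≤ s) {a b : Euc n}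
    (h : patch Q s a = patch Q s b) : patch Q t a = patch Q t b := by
  ext v
  simp only [mem_patch]
  constructor <;> rintro ⟨hv, hQ⟩
  · exact ⟨hv, (mem_patch.1 (h ▸ mem_patch.2 ⟨hv.trans_le hts, hQ⟩)).2⟩
  · exact ⟨hv, (mem_patch.1 (h.symm ▸ mem_patch.2 ⟨hv.trans_le hts, hQ⟩)).2⟩

lemma patch_translate {Q : Set (Euc n)} {s t : ℝ} {a b a' : Euc n}
    (h : patch Q s a = patch Q s b) (ha' : a' ∈ Q) (ht : 0 ≤ t)
    (hd : t + ‖a' - a‖ < s) :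
    b + (a' - a) ∈ Q ∧ patch Q t a' = patch Q t (b + (a' - a)) := by
  have key : ∀ w : Euc n, ‖w‖ < s → (a + w ∈ Q ↔ b + w ∈ Q) := by
    intro w hw
    constructor <;> intro hQ
    · exact (mem_patch.1 (h ▸ mem_patch.2 ⟨hw, hQ⟩)).2
    · exact (mem_patch.1 (h.symm ▸ mem_patch.2 ⟨hw, hQ⟩)).2
  have hmem : b + (a' - a) ∈ Q := by
    have hk := key (a' - a) (by linarith)
    have ha : a + (a' - a) = a' := by abel
    rw [ha] at hk
    exact hk.1 ha'
  refine ⟨hmem, ?_⟩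
  ext w
  simp only [mem_patch]
  have hn : ∀ w : Euc n, ‖w‖ < t → ‖(a' - a) + w‖ < s := fun w hw =>
    lt_of_le_of_lt (norm_add_le _ _) (by linarith)
  constructor <;> rintro ⟨hw, hQ⟩
  · refine ⟨hw, ?_⟩
    have hk := key ((a' - a) + w) (hn w hw)
    have e1 : a + ((a' - a) + w) = a' + w := by abel
    have e2 : b + ((a' - a) + w) = b + (a' - a) + w := by abel
    rw [e1, e2] at hk
    exact hk.1 hQ
  · refine ⟨hw, ?_⟩
    have hk := key ((a' - a) + w) (hn w hw)
    have e1 : a + ((a' - a) + w) = a' + w := by abel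
    have e2 : b + ((a' - a) + w) = b + (a' - a) + w := by abel
    rw [e1, e2] at hk
    exact hk.2 hQ

lemma finite_of_separated {δ ρ : ℝ} (hδ : 0 < δ) {s : Set (Euc n)}
    (hb : s ⊆ closedBall (0 : Euc n) ρ)
    (hsep : ∀ a ∈ s, ∀ b ∈ s, a ≠ b → δ ≤ ‖a - b‖) : s.Finite := by
  have htb : TotallyBounded s :=
    TotallyBounded.subset hb (isCompact_closedBall _ _).totallyBounded
  obtain ⟨t, htf, hst⟩ := (totallyBounded_iff.1 htb) (δ / 2) (by linarith)
  have hsub : s ⊆ ⋃ y ∈ t, s ∩ ball y (δ / 2) := by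
    intro x hx
    obtain ⟨y, hy, hxy⟩ := by simpa using hst hx
    exact mem_biUnion hy ⟨hx, hxy⟩
  refine Set.Finite.subset (Set.Finite.biUnion htf fun y _ => ?_) hsub
  apply Set.Subsingleton.finite
  rintro a ⟨ha, ha'⟩ b ⟨hb', hb''⟩
  by_contra hne
  have h1 : dist a b < δ := by
    calc dist a b ≤ dist a y + dist y b := dist_triangle _ _ _
      _ < δ / 2 + δ / 2 := by
          rw [mem_ball] at ha' hb''
          rw [dist_comm y b]; linarith
      _ = δ := by ring
  have h2 := hsep a ha b hb' hne
  rw [← dist_eq_norm] at h2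
  linarith

lemma lip_of_fderiv {φ : Euc n → Euc n} (hφ : Differentiable ℝ φ) {ε : ℝ}
    (hd : ∀ x, ‖fderiv ℝ φ x - ContinuousLinearMap.id ℝ (Euc n)‖ ≤ ε) (a b : Euc n) :
    ‖φ a - φ b - (a - b)‖ ≤ ε * ‖a - b‖ := by
  set ψ := fun x : Euc n => φ x - x with hψ
  have hdiff : ∀ x ∈ (univ : Set (Euc n)), DifferentiableAt ℝ ψ x := fun x _ =>
    (hφ x).sub differentiableAt_fun_id
  have hbound : ∀ x ∈ (univ : Set (Euc n)), ‖fderiv ℝ ψ x‖ ≤ ε := by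
    intro x _
    have : fderiv ℝ ψ x = fderiv ℝ φ x - ContinuousLinearMap.id ℝ (Euc n) := by
      rw [hψ]
      rw [fderiv_fun_sub (hφ x) differentiableAt_fun_id, fderiv_fun_id]
    rw [this]; exact hd x
  have := convex_univ.norm_image_sub_le_of_norm_fderiv_le hdiff hbound
    (mem_univ b) (mem_univ a)
  have heq : ψ a - ψ b = φ a - φ b - (a - b) := by simp only [hψ]; abel
  rwa [heq] at this

end Stmt16Aux

open Stmt16Aux

theorem stmt16 {n : ℕ} (P : Set (Euc n))
    (hUD : UnifDiscrete P) (hRD : RelDense P) (hFLC : FLC P) :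
    ∃ ε : ℝ, 0 < ε ∧ ε < 1 ∧
      ∀ φ : Euc n → Euc n, Differentiable ℝ φ →
      (∀ x : Euc n, ‖fderiv ℝ φ x - ContinuousLinearMap.id ℝ (Euc n)‖ < ε) →
      ∀ r > 0, ∃ r' > 0, ∀ x ∈ P, ∀ y ∈ P,
        patch (φ '' P) r' (φ x) = patch (φ '' P) r' (φ y) →
        patch P r x = patch P r y := by
  obtain ⟨δ, hδ, hsep⟩ := hUD
  obtain ⟨R₀, hR₀, hdense⟩ := hRD
  -- the set of short difference vectors of P is finite
  set S : Set (Euc n) :=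
    {u | u ∈ closedBall (0 : Euc n) (10 * R₀) ∧ ∃ a ∈ P, ∃ b ∈ P, u = a - b} with hSdef
  have hSfin : S.Finite := by
    have hC := hFLC (10 * R₀ + 1) (by linarith)
    have hsub : S ⊆ ⋃₀ {s : Set (Euc n) | ∃ x ∈ P, s = patch P (10 * R₀ + 1) x} := by
      rintro u ⟨hub, a, ha, b, hb, rfl⟩
      refine ⟨patch P (10 * R₀ + 1) b, ⟨b, hb, rfl⟩, mem_patch.2 ⟨?_, ?_⟩⟩
      · have := mem_closedBall_zero_iff.1 hub; linarith
      · have : b + (a - b) = a := by abel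
        rw [this]; exact ha
    refine Set.Finite.subset (Set.Finite.sUnion hC ?_) hsub
    rintro s ⟨x, hx, rfl⟩
    refine finite_of_separated hδ (ρ := 10 * R₀ + 1) ?_ ?_
    · intro v hv
      exact mem_closedBall_zero_iff.2 (le_of_lt (mem_patch.1 hv).1)
    · intro u hu v hv hne
      obtain ⟨-, hu2⟩ := mem_patch.1 hu
      obtain ⟨-, hv2⟩ := mem_patch.1 hv
      have hne2 : x + u ≠ x + v := fun h => hne (by simpa using h)
      have := hsep _ hu2 _ hv2 hne2
      have heq : (x + u) - (x + v) = u - v := by abel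
      rwa [heq] at this
  -- minimal gap η between distinct elements of S
  obtain ⟨η, hη, hηmin⟩ : ∃ η > 0, ∀ u ∈ S, ∀ v ∈ S, u ≠ v → η ≤ ‖u - v‖ := by
    set T : Set ℝ := (fun w : Euc n × Euc n => ‖w.1 - w.2‖) ''
      ((S ×ˢ S) ∩ {w : Euc n × Euc n | w.1 ≠ w.2}) with hTdef
    have hTfin : T.Finite := Set.Finite.image _ ((hSfin.prod hSfin).inter_of_left _)
    by_cases hTne : T.Nonempty
    · obtain ⟨η, hηT, hmin⟩ := Set.exists_min_image T id hTfin hTne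
      obtain ⟨⟨u, v⟩, ⟨⟨huS, hvS⟩, hne⟩, rfl⟩ := hηT
      refine ⟨‖u - v‖, norm_pos_iff.2 (sub_ne_zero.2 hne), ?_⟩
      intro a ha b hb hab
      exact hmin ‖a - b‖ ⟨(a, b), ⟨⟨ha, hb⟩, hab⟩, rfl⟩
    · refine ⟨1, one_pos, ?_⟩
      intro a ha b hb hab
      exact absurd ⟨‖a - b‖, ⟨(a, b), ⟨⟨ha, hb⟩, hab⟩, rfl⟩⟩ hTne
  set ε := min (1 / 2) (η / (24 * R₀)) with hεdef
  have hεpos : 0 < ε := lt_min (by norm_num) (by positivity)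
  have hεhalf : ε ≤ 1 / 2 := min_le_left _ _
  have hεη : 12 * ε * R₀ < η := by
    have h1 : ε ≤ η / (24 * R₀) := min_le_right _ _
    have h2 : 12 * ε * R₀ ≤ 12 * (η / (24 * R₀)) * R₀ := by nlinarith
    have h3 : 12 * (η / (24 * R₀)) * R₀ = η / 2 := by field_simp; ring
    linarith
  refine ⟨ε, hεpos, lt_of_le_of_lt hεhalf (by norm_num), ?_⟩
  intro φ hφ hdφ r hr
  have hlip : ∀ a b : Euc n, ‖φ a - φ b - (a - b)‖ ≤ ε * ‖a - b‖ :=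
    lip_of_fderiv hφ (fun x => (hdφ x).le)
  set Q : Set (Euc n) := φ '' P with hQdef
  set c : ℝ := 5 * R₀ with hcdef
  have hc : 0 < c := by positivity
  -- lower bound: (1 - ε)‖a - b‖ ≤ ‖φ a - φ b‖
  have hlow : ∀ a b : Euc n, ‖a - b‖ ≤ ‖φ a - φ b‖ + ε * ‖a - b‖ := by
    intro a b
    have h1 := hlip a b
    have h2 : ‖a - b‖ - ‖φ a - φ b‖ ≤ ‖(a - b) - (φ a - φ b)‖ := norm_sub_norm_le _ _
    have h3 : ‖(a - b) - (φ a - φ b)‖ = ‖φ a - φ b - (a - b)‖ := norm_sub_rev _ _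
    linarith
  -- one-step transfer
  have onestep : ∀ s : ℝ, c ≤ s → ∀ p' ∈ P, ∀ q' ∈ P,
      patch Q s (φ p') = patch Q s (φ q') → ∀ p ∈ P, ‖p - p'‖ ≤ 3 * R₀ →
      ∃ q ∈ P, q - q' = p - p' ∧
        patch Q (s - c) (φ p) = patch Q (s - c) (φ q) := by
    intro s hs p' hp' q' hq' hpatch p hp hpp'
    have hw1 : ‖φ p - φ p' - (p - p')‖ ≤ ε * ‖p - p'‖ := hlip p p'
    have hwtri : ‖φ p - φ p'‖ ≤ ‖φ p - φ p' - (p - p')‖ + ‖p - p'‖ := by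
      have he : φ p - φ p' = (φ p - φ p' - (p - p')) + (p - p') := by abel
      calc ‖φ p - φ p'‖ = ‖(φ p - φ p' - (p - p')) + (p - p')‖ := by rw [← he]
        _ ≤ _ := norm_add_le _ _
    have hεnn : (0:ℝ) ≤ ε := hεpos.le
    have hεp : ε * ‖p - p'‖ ≤ (1/2) * (3 * R₀) := by
      have := norm_nonneg (p - p')
      nlinarith
    have hwnorm : ‖φ p - φ p'‖ ≤ (9/2) * R₀ := by linarith
    obtain ⟨hmem, hpatch'⟩ := patch_translate hpatch ⟨p, hp, rfl⟩
      (t := s - c) (by linarith) (by linarith)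
    obtain ⟨q, hq, hfq⟩ := hmem
    have hfq' : φ q - φ q' = φ p - φ p' := by rw [hfq]; abel
    have hq2 : ‖q - q'‖ ≤ 9 * R₀ := by
      have h2 := hlow q q'
      rw [hfq'] at h2
      have := norm_nonneg (q - q')
      nlinarith
    have hdiff : q - q' = p - p' := by
      by_contra hne
      have hu : q - q' ∈ S := ⟨mem_closedBall_zero_iff.2 (by linarith), q, hq, q', hq', rfl⟩
      have hv : p - p' ∈ S := ⟨mem_closedBall_zero_iff.2 (by linarith), p, hp, p', hp', rfl⟩
      have hge := hηmin _ hu _ hv hne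
      have hid : (q - q') - (p - p') =
          (-(φ q - φ q' - (q - q'))) + (φ p - φ p' - (p - p')) := by
        rw [hfq']; abel
      have hdb : ‖(q - q') - (p - p')‖ ≤ 12 * ε * R₀ := by
        rw [hid]
        calc ‖(-(φ q - φ q' - (q - q'))) + (φ p - φ p' - (p - p'))‖
            ≤ ‖-(φ q - φ q' - (q - q'))‖ + ‖φ p - φ p' - (p - p')‖ := norm_add_le _ _
          _ = ‖φ q - φ q' - (q - q')‖ + ‖φ p - φ p' - (p - p')‖ := by rw [norm_neg]
          _ ≤ ε * ‖q - q'‖ + ε * ‖p - p'‖ := add_le_add (hlip q q') (hlip p p')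
          _ ≤ ε * (9 * R₀) + ε * (3 * R₀) := by
              refine add_le_add ?_ ?_ <;> exact mul_le_mul_of_nonneg_left (by linarith) hεnn
          _ = 12 * ε * R₀ := by ring
      linarith
    refine ⟨q, hq, hdiff, ?_⟩
    rw [← hfq] at hpatch'
    exact hpatch'
  -- main induction: transfer along chains
  have main : ∀ m : ℕ, ∀ s : ℝ, c * ((m : ℝ) + 1) ≤ s → ∀ x ∈ P, ∀ y ∈ P,
      patch Q s (φ x) = patch Q s (φ y) → ∀ p ∈ P, ‖p - x‖ ≤ R₀ * m →
      ∃ q ∈ P, q - y = p - x ∧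
        patch Q (s - c * ((m : ℝ) + 1)) (φ p) = patch Q (s - c * ((m : ℝ) + 1)) (φ q) := by
    intro m
    induction m with
    | zero =>
      intro s hs x hx y hy hpatch p hp hpx
      have hx0 : ‖p - x‖ ≤ 0 := by simpa using hpx
      have : p = x := by
        have := norm_nonneg (p - x)
        have hz : ‖p - x‖ = 0 := le_antisymm hx0 this
        have := norm_eq_zero.1 hz
        exact sub_eq_zero.1 this
      subst this
      simp only [Nat.cast_zero] at hs ⊢
      exact ⟨y, hy, by rw [sub_self, sub_self], patch_eq_mono (by linarith) hpatch⟩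
    | succ m ih =>
      intro s hs x hx y hy hpatch p hp hpx
      push_cast at hs hpx ⊢
      obtain ⟨p', hp'P, hp'x, hpp'⟩ : ∃ p' ∈ P, ‖p' - x‖ ≤ R₀ * m ∧ ‖p - p'‖ ≤ 3 * R₀ := by
        by_cases hcase : ‖p - x‖ ≤ 2 * R₀
        · refine ⟨x, hx, ?_, by linarith⟩
          simp only [sub_self, norm_zero]
          positivity
        · push_neg at hcase
          have hpx0 : (0:ℝ) < ‖p - x‖ := by linarith
          set z : Euc n := x + (1 - 2 * R₀ / ‖p - x‖) • (p - x) with hzdef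
          obtain ⟨p', hp', hp'z⟩ := hdense z
          have hfac : (0:ℝ) ≤ 1 - 2 * R₀ / ‖p - x‖ := by
            have : 2 * R₀ / ‖p - x‖ ≤ 1 := by
              rw [div_le_one hpx0]; linarith
            linarith
          have hzx : ‖z - x‖ = ‖p - x‖ - 2 * R₀ := by
            have he : z - x = (1 - 2 * R₀ / ‖p - x‖) • (p - x) := by
              rw [hzdef]; abel
            rw [he, norm_smul, Real.norm_eq_abs, abs_of_nonneg hfac]
            field_simp
          have hpz : ‖p - z‖ = 2 * R₀ := by
            have he : p - z = (2 * R₀ / ‖p - x‖) • (p - x) := by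
              rw [hzdef, sub_smul, one_smul]; abel
            rw [he, norm_smul, Real.norm_eq_abs, abs_of_nonneg (by positivity)]
            field_simp
          refine ⟨p', hp', ?_, ?_⟩
          · calc ‖p' - x‖ = ‖(p' - z) + (z - x)‖ := by rw [sub_add_sub_cancel]
              _ ≤ ‖p' - z‖ + ‖z - x‖ := norm_add_le _ _
              _ ≤ R₀ + (‖p - x‖ - 2 * R₀) := by rw [hzx]; linarith [hp'z]
              _ ≤ R₀ * m := by linarith
          · calc ‖p - p'‖ = ‖(p - z) + (z - p')‖ := by rw [sub_add_sub_cancel]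
              _ ≤ ‖p - z‖ + ‖z - p'‖ := norm_add_le _ _
              _ ≤ 2 * R₀ + R₀ := by
                  rw [hpz, ← norm_sub_rev p' z]; linarith [hp'z]
              _ = 3 * R₀ := by ring
      obtain ⟨q', hq'P, hq'y, hpatch'⟩ := ih s (by linarith) x hx y hy hpatch p' hp'P hp'x
      obtain ⟨q, hqP, hqq', hpatch''⟩ := onestep (s - c * ((m : ℝ) + 1)) (by linarith)
        p' hp'P q' hq'P hpatch' p hp hpp'
      refine ⟨q, hqP, ?_, ?_⟩
      · have : q - y = (q - q') + (q' - y) := by abel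
        rw [hqq', hq'y] at this
        rw [this]; abel
      · have he : s - c * ((m : ℝ) + 1) - c = s - c * ((m : ℝ) + 1 + 1) := by ring
        rw [← he]
        exact hpatch''
  -- conclusion
  set m : ℕ := Nat.ceil (r / R₀) with hmdef
  refine ⟨c * ((m : ℝ) + 1), by positivity, ?_⟩
  intro x hx y hy hpe
  have hrm : r ≤ R₀ * m := by
    have h1 := Nat.le_ceil (r / R₀)
    have h2 : r / R₀ ≤ (m : ℝ) := h1
    calc r = R₀ * (r / R₀) := by field_simp
      _ ≤ R₀ * m := mul_le_mul_of_nonneg_left h2 hR₀.le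
  ext v
  simp only [mem_patch]
  constructor <;> rintro ⟨hv, hvP⟩
  · obtain ⟨q, hq, hqv, -⟩ := main m (c * ((m : ℝ) + 1)) le_rfl x hx y hy hpe
      (x + v) hvP (by rw [add_sub_cancel_left]; linarith)
    rw [add_sub_cancel_left] at hqv
    refine ⟨hv, ?_⟩
    have : y + v = q := by rw [← hqv]; abel
    rw [this]; exact hq
  · obtain ⟨q, hq, hqv, -⟩ := main m (c * ((m : ℝ) + 1)) le_rfl y hy x hx hpe.symm
      (y + v) hvP (by rw [add_sub_cancel_left]; linarith)
    rw [add_sub_cancel_left] at hqv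
    refine ⟨hv, ?_⟩
    have : x + v = q := by rw [← hqv]; abel
    rw [this]; exact hq
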